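/- For R ∈ ℕ and a finite set D ⊆ ℤ^m with all elements of L∞-norm ≤ R, define [D]_R as the smallest subset of the L∞-ball of radius R in ℤ^m that contains D ∪ {0}, is closed under negation, and contains x₁ + x₂ whenever x₁, x₂ ∈ [D]_R and ‖x₁+x₂‖_∞ ≤ R. Then for any y ∈ ⟨D⟩ (the subgroup generated by D), y ∈ [D]_{2·|D|·R + ‖y‖_∞}. -/

import Mathlib

/-- The `L∞` norm of an integer vector, as a natural number. -/
def normInf {m : ℕ} (v : Fin m → ℤ) : ℕ :=
  Finset.univ.sup fun i => (v i).natAbs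

/-- The bounded-addition closure `[D]_R`: the smallest subset of the `L∞`-ball of radius `R`
containing `D ∪ {0}`, closed under negation, and closed under additions staying in the ball. -/
def boundedAdd {m : ℕ} (D : Set (Fin m → ℤ)) (R : ℕ) : Set (Fin m → ℤ) :=
  ⋂₀ {T : Set (Fin m → ℤ) |
    D ∪ {0} ⊆ T ∧ (∀ v ∈ T, normInf v ≤ R) ∧ (∀ v ∈ T, -v ∈ T) ∧
    ∀ v ∈ T, ∀ w ∈ T, normInf (v + w) ≤ R → v + w ∈ T}

lemma normInf_le_iff {m : ℕ} {v : Fin m → ℤ} {C : ℕ} :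
    normInf v ≤ C ↔ ∀ i, |v i| ≤ (C : ℤ) := by
  unfold normInf
  rw [Finset.sup_le_iff]
  constructor
  · intro h i
    have := h i (Finset.mem_univ i)
    rw [← Int.natCast_natAbs]
    exact_mod_cast this
  · intro h i _
    have := h i
    rw [← Int.natCast_natAbs] at this
    exact_mod_cast this

lemma abs_apply_le_normInf {m : ℕ} (v : Fin m → ℤ) (i : Fin m) :
    |v i| ≤ (normInf v : ℤ) :=
  normInf_le_iff.mp le_rfl i

/-- Auxiliary "proportional floor" function. -/
def auxF (N a t : ℕ) : ℤ := ((t : ℤ) * a) / N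

lemma auxF_zero (N a : ℕ) : auxF N a 0 = 0 := by simp [auxF]

lemma auxF_nonneg (N a t : ℕ) : 0 ≤ auxF N a t :=
  Int.ediv_nonneg (by positivity) (by positivity)

lemma auxF_mono (N a t : ℕ) (hN : 0 < N) : auxF N a t ≤ auxF N a (t + 1) := by
  unfold auxF
  apply Int.ediv_le_ediv (by exact_mod_cast hN)
  push_cast
  nlinarith [Int.ofNat_nonneg a]

lemma auxF_step (N a t : ℕ) (hN : 0 < N) (ha : a ≤ N) :
    auxF N a (t + 1) ≤ auxF N a t + 1 := by
  have hNz : (N : ℤ) ≠ 0 := by exact_mod_cast hN.ne'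
  have h1 : ((t : ℤ) + 1) * a ≤ (t : ℤ) * a + 1 * N := by
    have : (a : ℤ) ≤ N := by exact_mod_cast ha
    nlinarith
  calc auxF N a (t + 1) = ((t : ℤ) + 1) * a / N := by norm_num [auxF]
    _ ≤ ((t : ℤ) * a + 1 * N) / N := Int.ediv_le_ediv (by exact_mod_cast hN) h1
    _ = auxF N a t + 1 := by rw [Int.add_mul_ediv_right _ _ hNz]; rfl

lemma auxF_last (N a : ℕ) (hN : 0 < N) : auxF N a N = a := by
  have hNz : (N : ℤ) ≠ 0 := by exact_mod_cast hN.ne'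
  simpa [auxF] using Int.mul_ediv_cancel_left (a : ℤ) hNz

lemma auxF_mul (N a t : ℕ) :
    (N : ℤ) * auxF N a t = (t : ℤ) * a - ((t : ℤ) * a) % N := by
  have := Int.mul_ediv_add_emod ((t : ℤ) * a) N
  unfold auxF
  linarith

/-- Main construction lemma: a sum `∑ n j • d j` of generators `d j` of norm `≤ R`
belongs to any set containing `0` and the generators, closed under negation and under
additions whose result has norm at most `B ≥ 2kR + ‖∑ n j • d j‖`. -/
lemma key_lemma {m k : ℕ} (R B : ℕ) (d : Fin k → (Fin m → ℤ)) (n : Fin k → ℤ)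
    (hdR : ∀ j, normInf (d j) ≤ R)
    (T : Set (Fin m → ℤ))
    (h0 : (0 : Fin m → ℤ) ∈ T)
    (hd : ∀ j, d j ∈ T)
    (hneg : ∀ v ∈ T, -v ∈ T)
    (hadd : ∀ v ∈ T, ∀ w ∈ T, normInf (v + w) ≤ B → v + w ∈ T)
    (hB : 2 * k * R + normInf (∑ j, n j • d j) ≤ B) :
    (∑ j, n j • d j) ∈ T := by
  classical
  set y : Fin m → ℤ := ∑ j, n j • d j with hy
  set N : ℕ := ∑ j, (n j).natAbs with hN
  by_cases hN0 : N = 0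
  · have hsum : ∑ j, (n j).natAbs = 0 := by rw [← hN]; exact hN0
    have hnz : ∀ j, n j = 0 := fun j =>
      Int.natAbs_eq_zero.mp (Finset.sum_eq_zero_iff.mp hsum j (Finset.mem_univ j))
    have hy0 : y = 0 := by
      rw [hy]; apply Finset.sum_eq_zero; intro j _; rw [hnz j, zero_smul]
    rw [hy0]; exact h0
  have hNpos : 0 < N := Nat.pos_of_ne_zero hN0
  have hNposZ : (0 : ℤ) < N := by exact_mod_cast hNpos
  have haN : ∀ j, (n j).natAbs ≤ N := fun j =>
    Finset.single_le_sum (f := fun j => (n j).natAbs) (fun _ _ => Nat.zero_le _)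
      (Finset.mem_univ j)
  -- the partial sums
  set s : ℕ → (Fin m → ℤ) :=
    fun t => ∑ j, (Int.sign (n j) * auxF N (n j).natAbs t) • d j with hs
  have hdabs : ∀ j i, |d j i| ≤ (R : ℤ) := fun j i =>
    (abs_apply_le_normInf (d j) i).trans (by exact_mod_cast hdR j)
  -- norm bound on s t
  have hsbound : ∀ t ≤ N, ∀ i, |s t i| ≤ (normInf y : ℤ) + k * R := by
    intro t ht i
    have happ : s t i = ∑ j, (Int.sign (n j) * auxF N (n j).natAbs t) * d j i := by
      rw [hs]; simp [Finset.sum_apply]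
    have hyi : y i = ∑ j, n j * d j i := by
      rw [hy]; simp [Finset.sum_apply]
    have hkey : (N : ℤ) * s t i
        = (t : ℤ) * y i - ∑ j, Int.sign (n j) * (((t : ℤ) * (n j).natAbs) % N) * d j i := by
      rw [happ, hyi, Finset.mul_sum, Finset.mul_sum, ← Finset.sum_sub_distrib]
      apply Finset.sum_congr rfl
      intro j _
      have h1 : (N : ℤ) * auxF N (n j).natAbs t
          = (t : ℤ) * (n j).natAbs - ((t : ℤ) * (n j).natAbs) % N := auxF_mul N _ t
      have h2 : Int.sign (n j) * ((n j).natAbs : ℤ) = n j := Int.sign_mul_natAbs (n j)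
      linear_combination (Int.sign (n j) * d j i) * h1 + ((t : ℤ) * d j i) * h2
    have hrb : ∀ j : Fin k, |Int.sign (n j) * (((t : ℤ) * (n j).natAbs) % N) * d j i|
        ≤ (N : ℤ) * R := by
      intro j
      rw [abs_mul, abs_mul]
      have hsgn : |Int.sign (n j)| ≤ 1 := by
        rcases lt_trichotomy (n j) 0 with h|h|h
        · simp [Int.sign_eq_neg_one_of_neg h]
        · simp [h]
        · simp [Int.sign_eq_one_of_pos h]
      have hmod : |((t : ℤ) * (n j).natAbs) % N| ≤ (N : ℤ) := by
        rw [abs_of_nonneg (Int.emod_nonneg _ hNposZ.ne')]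
        exact (Int.emod_lt_of_pos _ hNposZ).le
      have hdd := hdabs j i
      have hstep1 : |Int.sign (n j)| * |((t : ℤ) * (n j).natAbs) % N| ≤ 1 * (N : ℤ) :=
        mul_le_mul hsgn hmod (abs_nonneg _) zero_le_one
      have hstep2 : |Int.sign (n j)| * |((t : ℤ) * (n j).natAbs) % N| * |d j i|
          ≤ (1 * (N : ℤ)) * R :=
        mul_le_mul hstep1 hdd (abs_nonneg _) (by positivity)
      linarith [hstep2]
    have hbig : |(N : ℤ) * s t i| ≤ (N : ℤ) * ((normInf y : ℤ) + k * R) := by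
      rw [hkey]
      calc |(t : ℤ) * y i - ∑ j, Int.sign (n j) * (((t : ℤ) * (n j).natAbs) % N) * d j i|
          ≤ |(t : ℤ) * y i| + |∑ j, Int.sign (n j) * (((t : ℤ) * (n j).natAbs) % N) * d j i| :=
            abs_sub _ _
        _ ≤ (t : ℤ) * (normInf y : ℤ) + ∑ j : Fin k, (N : ℤ) * R := by
            apply add_le_add
            · rw [abs_mul, abs_of_nonneg (by positivity : (0:ℤ) ≤ (t:ℤ))]
              exact mul_le_mul_of_nonneg_left (abs_apply_le_normInf y i) (by positivity)
            · exact (Finset.abs_sum_le_sum_abs _ _).trans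
                (Finset.sum_le_sum fun j _ => hrb j)
        _ ≤ (N : ℤ) * (normInf y : ℤ) + (N : ℤ) * (k * R) := by
            rw [Finset.sum_const, Finset.card_univ, Fintype.card_fin, nsmul_eq_mul]
            have ht' : (t : ℤ) ≤ N := by exact_mod_cast ht
            have hny : (0:ℤ) ≤ (normInf y : ℤ) := by positivity
            nlinarith [mul_le_mul_of_nonneg_right ht' hny]
        _ = (N : ℤ) * ((normInf y : ℤ) + k * R) := by ring
    rw [abs_mul, abs_of_nonneg hNposZ.le] at hbig
    exact le_of_mul_le_mul_left hbig hNposZ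
  -- the increments
  set c : ℕ → Fin k → ℤ :=
    fun t j => Int.sign (n j) * (auxF N (n j).natAbs (t + 1) - auxF N (n j).natAbs t) with hc
  have hcabs : ∀ t j, |c t j| ≤ 1 := by
    intro t j
    rw [hc]
    rw [abs_mul]
    have h1 : 0 ≤ auxF N (n j).natAbs (t + 1) - auxF N (n j).natAbs t := by
      have := auxF_mono N (n j).natAbs t hNpos; linarith
    have h2 : auxF N (n j).natAbs (t + 1) - auxF N (n j).natAbs t ≤ 1 := by
      have := auxF_step N (n j).natAbs t hNpos (haN j); linarith
    have hsgn : |Int.sign (n j)| ≤ 1 := by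
      rcases lt_trichotomy (n j) 0 with h|h|h
      · simp [Int.sign_eq_neg_one_of_neg h]
      · simp [h]
      · simp [Int.sign_eq_one_of_pos h]
    rw [abs_of_nonneg h1]
    nlinarith [abs_nonneg (Int.sign (n j))]
  have hccases : ∀ t j, c t j = 0 ∨ c t j = 1 ∨ c t j = -1 := by
    intro t j
    have h1 : 0 ≤ auxF N (n j).natAbs (t + 1) - auxF N (n j).natAbs t := by
      have := auxF_mono N (n j).natAbs t hNpos; linarith
    have h2 : auxF N (n j).natAbs (t + 1) - auxF N (n j).natAbs t ≤ 1 := by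
      have := auxF_step N (n j).natAbs t hNpos (haN j); linarith
    have hD : auxF N (n j).natAbs (t + 1) - auxF N (n j).natAbs t = 0 ∨
        auxF N (n j).natAbs (t + 1) - auxF N (n j).natAbs t = 1 := by omega
    have hsgn : Int.sign (n j) = 1 ∨ Int.sign (n j) = 0 ∨ Int.sign (n j) = -1 := by
      rcases lt_trichotomy (n j) 0 with h|h|h
      · right; right; exact Int.sign_eq_neg_one_of_neg h
      · right; left; simp [h]
      · left; exact Int.sign_eq_one_of_pos h
    rw [hc]
    rcases hD with hD | hD <;> rcases hsgn with hg | hg | hg <;> simp [hD, hg]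
  -- prefix partial sums within one step
  set A : ℕ → Finset (Fin k) := fun i => Finset.univ.filter (fun j : Fin k => (j : ℕ) < i)
    with hA
  set p : ℕ → ℕ → (Fin m → ℤ) := fun t i => s t + ∑ j ∈ A i, c t j • d j with hp
  have hcastB : (2 : ℤ) * k * R + (normInf y : ℤ) ≤ (B : ℤ) := by exact_mod_cast hB
  have hpbound : ∀ t < N, ∀ i, normInf (p t i) ≤ B := by
    intro t ht i
    rw [normInf_le_iff]
    intro i'
    have happ : p t i i' = s t i' + ∑ j ∈ A i, c t j * d j i' := by
      rw [hp]; simp [Finset.sum_apply]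
    rw [happ]
    have h1 : |s t i'| ≤ (normInf y : ℤ) + k * R := hsbound t ht.le i'
    have h2 : |∑ j ∈ A i, c t j * d j i'| ≤ (k : ℤ) * R := by
      calc |∑ j ∈ A i, c t j * d j i'| ≤ ∑ j ∈ A i, |c t j * d j i'| :=
            Finset.abs_sum_le_sum_abs _ _
        _ ≤ ∑ _j ∈ A i, (R : ℤ) := by
            apply Finset.sum_le_sum
            intro j _
            rw [abs_mul]
            have := hcabs t j
            have := hdabs j i'
            nlinarith [abs_nonneg (c t j), abs_nonneg (d j i')]
        _ = ((A i).card : ℤ) * R := by rw [Finset.sum_const, nsmul_eq_mul]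
        _ ≤ (k : ℤ) * R := by
            have : (A i).card ≤ k := by
              calc (A i).card ≤ (Finset.univ : Finset (Fin k)).card := Finset.card_le_card
                    (Finset.filter_subset _ _)
                _ = k := by simp
            have hRz : (0:ℤ) ≤ (R:ℤ) := by positivity
            have : ((A i).card : ℤ) ≤ (k : ℤ) := by exact_mod_cast this
            nlinarith
    calc |s t i' + ∑ j ∈ A i, c t j * d j i'|
        ≤ |s t i'| + |∑ j ∈ A i, c t j * d j i'| := abs_add_le _ _
      _ ≤ ((normInf y : ℤ) + k * R) + k * R := add_le_add h1 h2
      _ ≤ (B : ℤ) := by linarith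
  -- one step of the outer induction
  have hstep : ∀ t < N, s t ∈ T → s (t + 1) ∈ T := by
    intro t ht hst
    have hmem : ∀ i ≤ k, p t i ∈ T := by
      intro i
      induction i with
      | zero =>
        intro _
        have : p t 0 = s t := by
          rw [hp]
          have : A 0 = ∅ := by rw [hA]; ext j; simp
          simp [this]
        rw [this]; exact hst
      | succ i ih =>
        intro hik
        have hik' : i < k := hik
        set j0 : Fin k := ⟨i, hik'⟩ with hj0
        have hAsucc : A (i + 1) = insert j0 (A i) := by
          rw [hA]
          ext j
          simp only [Finset.mem_filter, Finset.mem_univ, true_and, Finset.mem_insert]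
          constructor
          · intro h
            rcases Nat.lt_succ_iff_lt_or_eq.mp h with h | h
            · right; simpa using h
            · left; exact Fin.ext h
          · rintro (h | h)
            · rw [h]; exact Nat.lt_succ_self i
            · exact Nat.lt_succ_of_lt (by simpa using h)
        have hj0A : j0 ∉ A i := by rw [hA]; simp [hj0]
        have hpsucc : p t (i + 1) = p t i + c t j0 • d j0 := by
          rw [hp]
          simp only
          rw [hAsucc, Finset.sum_insert hj0A]
          abel
        have hpi : p t i ∈ T := ih (Nat.le_of_succ_le hik)
        rcases hccases t j0 with hc0 | hc0 | hc0
        · rw [hpsucc, hc0, zero_smul, add_zero]; exact hpi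
        · rw [hpsucc, hc0, one_smul]
          exact hadd _ hpi _ (hd j0) (by
            have := hpbound t ht (i + 1)
            rw [hpsucc, hc0, one_smul] at this
            exact this)
        · rw [hpsucc, hc0]
          have : (-1 : ℤ) • d j0 = -(d j0) := by simp
          rw [this]
          exact hadd _ hpi _ (hneg _ (hd j0)) (by
            have := hpbound t ht (i + 1)
            rw [hpsucc, hc0] at this
            simpa using this)
    have hfinal : p t k = s (t + 1) := by
      have hAk : A k = Finset.univ := by
        rw [hA]; ext j; simp [j.isLt]
      rw [hp]
      simp only
      rw [hAk, hs]
      simp only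
      rw [← Finset.sum_add_distrib]
      apply Finset.sum_congr rfl
      intro j _
      rw [hc, ← add_smul]
      congr 1
      ring
    rw [← hfinal]
    exact hmem k le_rfl
  -- outer induction
  have houter : ∀ t ≤ N, s t ∈ T := by
    intro t
    induction t with
    | zero =>
      intro _
      have : s 0 = 0 := by
        rw [hs]
        apply Finset.sum_eq_zero
        intro j _
        rw [auxF_zero]
        simp
      rw [this]; exact h0
    | succ t ih =>
      intro ht
      exact hstep t (Nat.lt_of_succ_le ht) (ih (Nat.le_of_succ_le ht))
  have hsN : s N = y := by
    rw [hs, hy]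
    apply Finset.sum_congr rfl
    intro j _
    rw [auxF_last N _ hNpos]
    congr 1
    exact Int.sign_mul_natAbs (n j)
  have := houter N le_rfl
  rw [hsN] at this
  exact this

theorem stmt5 {m : ℕ} (R : ℕ) (D : Finset (Fin m → ℤ))
    (hD : ∀ v ∈ D, normInf v ≤ R)
    (y : Fin m → ℤ) (hy : y ∈ AddSubgroup.closure (D : Set (Fin m → ℤ))) :
    y ∈ boundedAdd (D : Set (Fin m → ℤ)) (2 * D.card * R + normInf y) := by
  classical
  set B : ℕ := 2 * D.card * R + normInf y with hB
  set T : Set (Fin m → ℤ) := boundedAdd (D : Set (Fin m → ℤ)) B with hT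
  -- properties of T
  have hmemT : ∀ v, v ∈ T ↔ ∀ S ∈ {S : Set (Fin m → ℤ) |
      (D : Set (Fin m → ℤ)) ∪ {0} ⊆ S ∧ (∀ v ∈ S, normInf v ≤ B) ∧ (∀ v ∈ S, -v ∈ S) ∧
      ∀ v ∈ S, ∀ w ∈ S, normInf (v + w) ≤ B → v + w ∈ S}, v ∈ S := by
    intro v; exact Set.mem_sInter
  have h0 : (0 : Fin m → ℤ) ∈ T := by
    rw [hmemT]; intro S hS; exact hS.1 (Or.inr rfl)
  have hdT : ∀ v ∈ D, v ∈ T := by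
    intro v hv
    rw [hmemT]; intro S hS; exact hS.1 (Or.inl hv)
  have hneg : ∀ v ∈ T, -v ∈ T := by
    intro v hv
    rw [hmemT] at hv ⊢
    intro S hS
    exact hS.2.2.1 v (hv S hS)
  have hadd : ∀ v ∈ T, ∀ w ∈ T, normInf (v + w) ≤ B → v + w ∈ T := by
    intro v hv w hw hn
    rw [hmemT] at hv hw ⊢
    intro S hS
    exact hS.2.2.2 v (hv S hS) w (hw S hS) hn
  -- representation
  rw [← Submodule.span_int_eq_addSubgroupClosure, Submodule.mem_toAddSubgroup] at hy
  obtain ⟨f, -, hf⟩ := Submodule.mem_span_finset.mp hy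
  set k := D.card with hk
  set d : Fin k → (Fin m → ℤ) := fun j => ((D.equivFin.symm j : D) : Fin m → ℤ) with hd
  set n : Fin k → ℤ := fun j => f (d j) with hn
  have hrep : ∑ j, n j • d j = y := by
    rw [hn, hd, ← hf, ← Finset.sum_coe_sort D (fun v => f v • v)]
    exact Equiv.sum_comp D.equivFin.symm (fun x : D => f (x : Fin m → ℤ) • (x : Fin m → ℤ))
  have hdmem : ∀ j, d j ∈ D := fun j => (D.equivFin.symm j).2
  have hkey := key_lemma R B d n (fun j => hD _ (hdmem j)) T h0
    (fun j => hdT _ (hdmem j)) hneg hadd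
    (by rw [hrep])
  rw [hrep] at hkey
  exact hkey
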